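/- Let aᵢ, bᵢ, cᵢ : ℝ → ℂ (i = 1,2,3) be continuous on [0,1]. For each i define hᵢ : ℝ → ℂ on [0,10] by: hᵢ(t) = aᵢ(t) on [0,1], bᵢ(t−1) on (1,2], −aᵢ(3−t) on (2,3], −bᵢ(4−t) on (3,4], cᵢ(t−4) on (4,5], bᵢ(t−5) on (5,6], aᵢ(t−6) on (6,7], −bᵢ(8−t) on (7,8], −aᵢ(9−t) on (8,9], −cᵢ(10−t) on (9,10]. Write Aᵢ = ∫_0^1 aᵢ, Bᵢ = ∫_0^1 bᵢ, Cᵢ = ∫_0^1 cᵢ. Then ∫_{0 ≤ t₁ ≤ t₂ ≤ t₃ ≤ 10} h₁(t₁)h₂(t₂)h₃(t₃) dt₁dt₂dt₃ = (A₁B₂ − B₁A₂)C₃ + (A₃B₂ − B₃A₂)C₁. -/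

import Mathlib

open MeasureTheory Set intervalIntegral

noncomputable def II1 (f : ℝ → ℂ) (u v : ℝ) : ℂ := ∫ t in u..v, f t
noncomputable def II2 (f g : ℝ → ℂ) (u v : ℝ) : ℂ := ∫ t in u..v, II1 f u t * g t
noncomputable def II3 (f g p : ℝ → ℂ) (u v : ℝ) : ℂ := ∫ t in u..v, II2 f g u t * p t

namespace DblComm

lemma iv_mono {f : ℝ → ℂ} {u w x y : ℝ} (hf : IntervalIntegrable f volume u w)
    (h1 : u ≤ x) (h2 : x ≤ y) (h3 : y ≤ w) : IntervalIntegrable f volume x y :=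
  hf.mono_set (by
    rw [Set.uIcc_of_le h2, Set.uIcc_of_le (h1.trans (h2.trans h3))]
    exact Set.Icc_subset_Icc h1 h3)

lemma II1_cont {f : ℝ → ℂ} {u w : ℝ} (hf : IntervalIntegrable f volume u w) :
    ContinuousOn (fun t => II1 f u t) (Set.uIcc u w) :=
  continuousOn_primitive_interval' hf left_mem_uIcc

lemma II2_integrable {f g : ℝ → ℂ} {u w : ℝ} (hf : IntervalIntegrable f volume u w)
    (hg : IntervalIntegrable g volume u w) :
    IntervalIntegrable (fun t => II1 f u t * g t) volume u w :=
  hg.continuousOn_mul (II1_cont hf)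

lemma II2_cont {f g : ℝ → ℂ} {u w : ℝ} (hf : IntervalIntegrable f volume u w)
    (hg : IntervalIntegrable g volume u w) :
    ContinuousOn (fun t => II2 f g u t) (Set.uIcc u w) :=
  continuousOn_primitive_interval' (II2_integrable hf hg) left_mem_uIcc

lemma II3_integrable {f g p : ℝ → ℂ} {u w : ℝ} (hf : IntervalIntegrable f volume u w)
    (hg : IntervalIntegrable g volume u w) (hp : IntervalIntegrable p volume u w) :
    IntervalIntegrable (fun t => II2 f g u t * p t) volume u w :=
  hp.continuousOn_mul (II2_cont hf hg)

lemma uIcc_sub {u v w : ℝ} (h1 : u ≤ v) (h2 : v ≤ w) : Set.uIcc v w ⊆ Set.uIcc u w := by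
  rw [Set.uIcc_of_le h2, Set.uIcc_of_le (h1.trans h2)]
  exact Set.Icc_subset_Icc h1 le_rfl

lemma int_congr_Ioc {p q : ℝ → ℂ} {u v : ℝ} (huv : u ≤ v)
    (hpq : ∀ t ∈ Set.Ioc u v, p t = q t) :
    (∫ t in u..v, p t) = ∫ t in u..v, q t := by
  rw [integral_of_le huv, integral_of_le huv]
  exact setIntegral_congr_fun measurableSet_Ioc hpq

lemma II1_split {f : ℝ → ℂ} {u v w : ℝ} (hf : IntervalIntegrable f volume u w)
    (h1 : u ≤ v) (h2 : v ≤ w) : II1 f u w = II1 f u v + II1 f v w :=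
  (integral_add_adjacent_intervals (iv_mono hf le_rfl h1 h2) (iv_mono hf h1 h2 le_rfl)).symm

lemma II2_split {f g : ℝ → ℂ} {u v w : ℝ} (hf : IntervalIntegrable f volume u w)
    (hg : IntervalIntegrable g volume u w) (h1 : u ≤ v) (h2 : v ≤ w) :
    II2 f g u w = II2 f g u v + II1 f u v * II1 g v w + II2 f g v w := by
  have fuv := iv_mono hf le_rfl h1 h2
  have fvw := iv_mono hf h1 h2 le_rfl
  have guv := iv_mono hg le_rfl h1 h2
  have gvw := iv_mono hg h1 h2 le_rfl
  have qa : IntervalIntegrable (fun t => II1 f u t * g t) volume u v :=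
    guv.continuousOn_mul (II1_cont fuv)
  have qb : IntervalIntegrable (fun t => II1 f u t * g t) volume v w :=
    gvw.continuousOn_mul ((II1_cont hf).mono (uIcc_sub h1 h2))
  have key : (∫ t in v..w, II1 f u t * g t) = II1 f u v * II1 g v w + II2 f g v w := by
    have e : ∀ t ∈ Set.uIcc v w, II1 f u t * g t = II1 f u v * g t + II1 f v t * g t := by
      intro t ht
      rw [Set.uIcc_of_le h2] at ht
      rw [II1_split (iv_mono hf le_rfl (h1.trans ht.1) ht.2) h1 ht.1]
      ring
    rw [integral_congr e, integral_add (gvw.const_mul _) (II2_integrable fvw gvw)]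
    rw [intervalIntegral.integral_const_mul]
    rfl
  rw [II2, ← integral_add_adjacent_intervals qa qb, key]
  show II2 f g u v + (II1 f u v * II1 g v w + II2 f g v w) = _
  ring

lemma II3_split {f g p : ℝ → ℂ} {u v w : ℝ} (hf : IntervalIntegrable f volume u w)
    (hg : IntervalIntegrable g volume u w) (hp : IntervalIntegrable p volume u w)
    (h1 : u ≤ v) (h2 : v ≤ w) :
    II3 f g p u w = II3 f g p u v + II2 f g u v * II1 p v w + II1 f u v * II2 g p v w
      + II3 f g p v w := by
  have fuv := iv_mono hf le_rfl h1 h2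
  have fvw := iv_mono hf h1 h2 le_rfl
  have guv := iv_mono hg le_rfl h1 h2
  have gvw := iv_mono hg h1 h2 le_rfl
  have puv := iv_mono hp le_rfl h1 h2
  have pvw := iv_mono hp h1 h2 le_rfl
  have qa : IntervalIntegrable (fun t => II2 f g u t * p t) volume u v :=
    puv.continuousOn_mul (II2_cont fuv guv)
  have qb : IntervalIntegrable (fun t => II2 f g u t * p t) volume v w :=
    pvw.continuousOn_mul ((II2_cont hf hg).mono (uIcc_sub h1 h2))
  have key : (∫ t in v..w, II2 f g u t * p t)
      = II2 f g u v * II1 p v w + II1 f u v * II2 g p v w + II3 f g p v w := by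
    have e : ∀ t ∈ Set.uIcc v w, II2 f g u t * p t
        = II2 f g u v * p t + II1 f u v * (II1 g v t * p t) + II2 f g v t * p t := by
      intro t ht
      rw [Set.uIcc_of_le h2] at ht
      rw [II2_split (iv_mono hf le_rfl (h1.trans ht.1) ht.2) (iv_mono hg le_rfl (h1.trans ht.1) ht.2) h1 ht.1]
      ring
    have i1 : IntervalIntegrable (fun t => II2 f g u v * p t) volume v w := pvw.const_mul _
    have i2 : IntervalIntegrable (fun t => II1 f u v * (II1 g v t * p t)) volume v w :=
      (pvw.continuousOn_mul (II1_cont gvw)).const_mul _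
    have i3 : IntervalIntegrable (fun t => II2 f g v t * p t) volume v w :=
      II3_integrable fvw gvw pvw
    rw [integral_congr e, integral_add (i1.add i2) i3, integral_add i1 i2,
      intervalIntegral.integral_const_mul, intervalIntegral.integral_const_mul]
    rfl
  rw [II3, ← integral_add_adjacent_intervals qa qb, key]
  show II3 f g p u v + (II2 f g u v * II1 p v w + II1 f u v * II2 g p v w + II3 f g p v w) = _
  ring


/-! ### Evaluation of iterated integrals over a single segment -/

lemma seg_I1_fwd' {f h : ℝ → ℂ} {u v : ℝ} (huv : v = u + 1)
    (hh : ∀ t ∈ Set.Ioc u v, h t = f (t - u)) {t : ℝ} (ht : t ∈ Set.Icc u v) :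
    II1 h u t = II1 f 0 (t - u) := by
  have hut : u ≤ t := ht.1
  simp only [II1]
  rw [int_congr_Ioc hut (fun s hs => hh s ⟨hs.1, hs.2.trans ht.2⟩)]
  have e : (∫ s in u..t, f (s - u)) = ∫ x in u - u..t - u, f x :=
    integral_comp_sub_right f u
  rw [e, show u - u = (0:ℝ) by ring]

lemma seg_I1_fwd {f h : ℝ → ℂ} {u v : ℝ} (huv : v = u + 1)
    (hh : ∀ t ∈ Set.Ioc u v, h t = f (t - u)) :
    II1 h u v = II1 f 0 1 := by
  have hle : u ≤ v := by rw [huv]; linarith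
  rw [seg_I1_fwd' huv hh ⟨hle, le_rfl⟩, show v - u = (1:ℝ) by rw [huv]; ring]

lemma seg_I1_rev' {f h : ℝ → ℂ} {u v : ℝ} (huv : v = u + 1)
    (hf : IntervalIntegrable f volume 0 1)
    (hh : ∀ t ∈ Set.Ioc u v, h t = -f (v - t)) {t : ℝ} (ht : t ∈ Set.Icc u v) :
    II1 h u t = II1 f 0 (v - t) - II1 f 0 1 := by
  have hut : u ≤ t := ht.1
  have hx0 : (0:ℝ) ≤ v - t := by linarith [ht.2]
  have hx1 : v - t ≤ 1 := by rw [huv]; linarith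
  simp only [II1]
  rw [int_congr_Ioc hut (fun s hs => hh s ⟨hs.1, hs.2.trans ht.2⟩)]
  rw [intervalIntegral.integral_neg]
  have e : (∫ s in u..t, f (v - s)) = ∫ x in v - t..v - u, f x :=
    integral_comp_sub_left f v
  rw [e, show v - u = (1:ℝ) by rw [huv]; ring]
  have adj := integral_add_adjacent_intervals (μ := volume) (f := f)
    (iv_mono hf le_rfl hx0 hx1) (iv_mono hf hx0 hx1 le_rfl)
  linear_combination -adj

lemma seg_I1_rev {f h : ℝ → ℂ} {u v : ℝ} (huv : v = u + 1)
    (hf : IntervalIntegrable f volume 0 1)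
    (hh : ∀ t ∈ Set.Ioc u v, h t = -f (v - t)) :
    II1 h u v = -II1 f 0 1 := by
  have hle : u ≤ v := by rw [huv]; linarith
  rw [seg_I1_rev' huv hf hh ⟨hle, le_rfl⟩, show v - v = (0:ℝ) by ring,
    show II1 f 0 0 = 0 from integral_same]
  ring

lemma seg_I2_fwd' {f0 f1 h0 h1 : ℝ → ℂ} {u v : ℝ} (huv : v = u + 1)
    (hh0 : ∀ t ∈ Set.Ioc u v, h0 t = f0 (t - u))
    (hh1 : ∀ t ∈ Set.Ioc u v, h1 t = f1 (t - u)) {t : ℝ} (ht : t ∈ Set.Icc u v) :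
    II2 h0 h1 u t = II2 f0 f1 0 (t - u) := by
  have hut : u ≤ t := ht.1
  simp only [II2]
  have e1 : ∀ s ∈ Set.Ioc u t, II1 h0 u s * h1 s = II1 f0 0 (s - u) * f1 (s - u) := by
    intro s hs
    have hs' : s ∈ Set.Icc u v := ⟨hs.1.le, hs.2.trans ht.2⟩
    rw [seg_I1_fwd' huv hh0 hs', hh1 s ⟨hs.1, hs'.2⟩]
  rw [int_congr_Ioc hut e1]
  have e2 : (∫ s in u..t, II1 f0 0 (s - u) * f1 (s - u))
      = ∫ x in u - u..t - u, II1 f0 0 x * f1 x :=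
    integral_comp_sub_right (fun x => II1 f0 0 x * f1 x) u
  rw [e2, show u - u = (0:ℝ) by ring]

lemma seg_I2_fwd {f0 f1 h0 h1 : ℝ → ℂ} {u v : ℝ} (huv : v = u + 1)
    (hh0 : ∀ t ∈ Set.Ioc u v, h0 t = f0 (t - u))
    (hh1 : ∀ t ∈ Set.Ioc u v, h1 t = f1 (t - u)) :
    II2 h0 h1 u v = II2 f0 f1 0 1 := by
  have hle : u ≤ v := by rw [huv]; linarith
  rw [seg_I2_fwd' huv hh0 hh1 ⟨hle, le_rfl⟩, show v - u = (1:ℝ) by rw [huv]; ring]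

lemma Phi_eval {f0 f1 : ℝ → ℂ} (hf0 : IntervalIntegrable f0 volume 0 1)
    (hf1 : IntervalIntegrable f1 volume 0 1) {y : ℝ} (hy0 : 0 ≤ y) (hy1 : y ≤ 1) :
    (∫ x in (0:ℝ)..y, (II1 f0 0 x - II1 f0 0 1) * (-f1 x))
      = II1 f0 0 1 * II1 f1 0 y - II2 f0 f1 0 y := by
  have hf0y := iv_mono hf0 le_rfl hy0 hy1
  have hf1y := iv_mono hf1 le_rfl hy0 hy1
  have hq : IntervalIntegrable (fun x => II1 f0 0 x * f1 x) volume 0 y :=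
    II2_integrable hf0y hf1y
  have e : ∀ x ∈ Set.uIcc (0:ℝ) y,
      (II1 f0 0 x - II1 f0 0 1) * (-f1 x) = II1 f0 0 1 * f1 x - II1 f0 0 x * f1 x :=
    fun x _ => by ring
  rw [integral_congr e, integral_sub (hf1y.const_mul _) hq, intervalIntegral.integral_const_mul]
  rfl

lemma seg_I2_rev' {f0 f1 h0 h1 : ℝ → ℂ} {u v : ℝ} (huv : v = u + 1)
    (hf0 : IntervalIntegrable f0 volume 0 1) (hf1 : IntervalIntegrable f1 volume 0 1)
    (hh0 : ∀ t ∈ Set.Ioc u v, h0 t = -f0 (v - t))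
    (hh1 : ∀ t ∈ Set.Ioc u v, h1 t = -f1 (v - t)) {t : ℝ} (ht : t ∈ Set.Icc u v) :
    II2 h0 h1 u t = (II1 f0 0 1 * II1 f1 0 1 - II2 f0 f1 0 1)
      - (II1 f0 0 1 * II1 f1 0 (v - t) - II2 f0 f1 0 (v - t)) := by
  have hut : u ≤ t := ht.1
  have hx0 : (0:ℝ) ≤ v - t := by linarith [ht.2]
  have hx1 : v - t ≤ 1 := by rw [huv]; linarith
  show (∫ s in u..t, II1 h0 u s * h1 s) = _
  have e1 : ∀ s ∈ Set.Ioc u t, II1 h0 u s * h1 s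
      = (II1 f0 0 (v - s) - II1 f0 0 1) * (-f1 (v - s)) := by
    intro s hs
    have hs' : s ∈ Set.Icc u v := ⟨hs.1.le, hs.2.trans ht.2⟩
    rw [seg_I1_rev' huv hf0 hh0 hs', hh1 s ⟨hs.1, hs'.2⟩]
  rw [int_congr_Ioc hut e1]
  have e2 : (∫ s in u..t, (II1 f0 0 (v - s) - II1 f0 0 1) * (-f1 (v - s)))
      = ∫ x in v - t..v - u, (II1 f0 0 x - II1 f0 0 1) * (-f1 x) :=
    integral_comp_sub_left (fun x => (II1 f0 0 x - II1 f0 0 1) * (-f1 x)) v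
  rw [e2, show v - u = (1:ℝ) by rw [huv]; ring]
  have hPhi : IntervalIntegrable (fun x => (II1 f0 0 x - II1 f0 0 1) * (-f1 x)) volume 0 1 :=
    hf1.neg.continuousOn_mul ((II1_cont hf0).sub continuousOn_const)
  have adj : (∫ x in (0:ℝ)..(v - t), (II1 f0 0 x - II1 f0 0 1) * (-f1 x))
        + (∫ x in (v - t)..1, (II1 f0 0 x - II1 f0 0 1) * (-f1 x))
      = ∫ x in (0:ℝ)..1, (II1 f0 0 x - II1 f0 0 1) * (-f1 x) :=
    integral_add_adjacent_intervals (iv_mono hPhi le_rfl hx0 hx1) (iv_mono hPhi hx0 hx1 le_rfl)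
  rw [Phi_eval hf0 hf1 hx0 hx1, Phi_eval hf0 hf1 zero_le_one le_rfl] at adj
  linear_combination adj

lemma seg_I2_rev {f0 f1 h0 h1 : ℝ → ℂ} {u v : ℝ} (huv : v = u + 1)
    (hf0 : IntervalIntegrable f0 volume 0 1) (hf1 : IntervalIntegrable f1 volume 0 1)
    (hh0 : ∀ t ∈ Set.Ioc u v, h0 t = -f0 (v - t))
    (hh1 : ∀ t ∈ Set.Ioc u v, h1 t = -f1 (v - t)) :
    II2 h0 h1 u v = II1 f0 0 1 * II1 f1 0 1 - II2 f0 f1 0 1 := by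
  have hle : u ≤ v := by rw [huv]; linarith
  rw [seg_I2_rev' huv hf0 hf1 hh0 hh1 ⟨hle, le_rfl⟩, show v - v = (0:ℝ) by ring,
    show II1 f1 0 0 = 0 from integral_same, show II2 f0 f1 0 0 = 0 from integral_same]
  ring

lemma seg_I3_fwd {f0 f1 f2 h0 h1 h2 : ℝ → ℂ} {u v : ℝ} (huv : v = u + 1)
    (hh0 : ∀ t ∈ Set.Ioc u v, h0 t = f0 (t - u))
    (hh1 : ∀ t ∈ Set.Ioc u v, h1 t = f1 (t - u))
    (hh2 : ∀ t ∈ Set.Ioc u v, h2 t = f2 (t - u)) :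
    II3 h0 h1 h2 u v = II3 f0 f1 f2 0 1 := by
  have hle : u ≤ v := by rw [huv]; linarith
  show (∫ t in u..v, II2 h0 h1 u t * h2 t) = _
  have e1 : ∀ t ∈ Set.Ioc u v, II2 h0 h1 u t * h2 t = II2 f0 f1 0 (t - u) * f2 (t - u) := by
    intro t htm
    rw [seg_I2_fwd' huv hh0 hh1 ⟨htm.1.le, htm.2⟩, hh2 t htm]
  rw [int_congr_Ioc hle e1]
  have e2 : (∫ t in u..v, II2 f0 f1 0 (t - u) * f2 (t - u))
      = ∫ x in u - u..v - u, II2 f0 f1 0 x * f2 x :=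
    integral_comp_sub_right (fun x => II2 f0 f1 0 x * f2 x) u
  rw [e2, show u - u = (0:ℝ) by ring, show v - u = (1:ℝ) by rw [huv]; ring]
  rfl

lemma seg_I3_rev {f0 f1 f2 h0 h1 h2 : ℝ → ℂ} {u v : ℝ} (huv : v = u + 1)
    (hf0 : IntervalIntegrable f0 volume 0 1) (hf1 : IntervalIntegrable f1 volume 0 1)
    (hf2 : IntervalIntegrable f2 volume 0 1)
    (hh0 : ∀ t ∈ Set.Ioc u v, h0 t = -f0 (v - t))
    (hh1 : ∀ t ∈ Set.Ioc u v, h1 t = -f1 (v - t))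
    (hh2 : ∀ t ∈ Set.Ioc u v, h2 t = -f2 (v - t)) :
    II3 h0 h1 h2 u v = -II3 f0 f1 f2 0 1 + II2 f0 f1 0 1 * II1 f2 0 1
      + II1 f0 0 1 * II2 f1 f2 0 1 - II1 f0 0 1 * II1 f1 0 1 * II1 f2 0 1 := by
  have hle : u ≤ v := by rw [huv]; linarith
  show (∫ t in u..v, II2 h0 h1 u t * h2 t) = _
  have e1 : ∀ t ∈ Set.Ioc u v, II2 h0 h1 u t * h2 t
      = ((II1 f0 0 1 * II1 f1 0 1 - II2 f0 f1 0 1)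
          - (II1 f0 0 1 * II1 f1 0 (v - t) - II2 f0 f1 0 (v - t))) * (-f2 (v - t)) := by
    intro t htm
    rw [seg_I2_rev' huv hf0 hf1 hh0 hh1 ⟨htm.1.le, htm.2⟩, hh2 t htm]
  rw [int_congr_Ioc hle e1]
  have e2 : (∫ t in u..v, ((II1 f0 0 1 * II1 f1 0 1 - II2 f0 f1 0 1)
        - (II1 f0 0 1 * II1 f1 0 (v - t) - II2 f0 f1 0 (v - t))) * (-f2 (v - t)))
      = ∫ x in v - v..v - u, ((II1 f0 0 1 * II1 f1 0 1 - II2 f0 f1 0 1)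
        - (II1 f0 0 1 * II1 f1 0 x - II2 f0 f1 0 x)) * (-f2 x) :=
    integral_comp_sub_left (fun x => ((II1 f0 0 1 * II1 f1 0 1 - II2 f0 f1 0 1)
        - (II1 f0 0 1 * II1 f1 0 x - II2 f0 f1 0 x)) * (-f2 x)) v
  rw [e2, show v - v = (0:ℝ) by ring, show v - u = (1:ℝ) by rw [huv]; ring]
  have e3 : ∀ x ∈ Set.uIcc (0:ℝ) 1,
      ((II1 f0 0 1 * II1 f1 0 1 - II2 f0 f1 0 1)
        - (II1 f0 0 1 * II1 f1 0 x - II2 f0 f1 0 x)) * (-f2 x)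
      = ((II2 f0 f1 0 1 - II1 f0 0 1 * II1 f1 0 1) * f2 x
          + II1 f0 0 1 * (II1 f1 0 x * f2 x))
        + (-1 : ℂ) * (II2 f0 f1 0 x * f2 x) := fun x _ => by ring
  have i1 : IntervalIntegrable
      (fun x => (II2 f0 f1 0 1 - II1 f0 0 1 * II1 f1 0 1) * f2 x) volume 0 1 :=
    hf2.const_mul _
  have i2 : IntervalIntegrable (fun x => II1 f0 0 1 * (II1 f1 0 x * f2 x)) volume 0 1 :=
    (II2_integrable hf1 hf2).const_mul _
  have i3 : IntervalIntegrable (fun x => (-1 : ℂ) * (II2 f0 f1 0 x * f2 x)) volume 0 1 :=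
    (II3_integrable hf0 hf1 hf2).const_mul _
  rw [integral_congr e3, integral_add (i1.add i2) i3, integral_add i1 i2,
    intervalIntegral.integral_const_mul, intervalIntegral.integral_const_mul, intervalIntegral.integral_const_mul]
  show (II2 f0 f1 0 1 - II1 f0 0 1 * II1 f1 0 1) * II1 f2 0 1
      + II1 f0 0 1 * II2 f1 f2 0 1 + (-1 : ℂ) * II3 f0 f1 f2 0 1 = _
  ring


lemma seg_int_fwd {f h : ℝ → ℂ} {u v : ℝ} (huv : v = u + 1)
    (hcf : ContinuousOn f (Set.Icc 0 1))
    (hh : ∀ t ∈ Set.Ioc u v, h t = f (t - u)) : IntervalIntegrable h volume u v := by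
  have hle : u ≤ v := by rw [huv]; linarith
  rw [intervalIntegrable_iff_integrableOn_Ioc_of_le hle]
  have hmap : Set.MapsTo (fun t => t - u) (Set.Icc u v) (Set.Icc 0 1) := by
    intro t ht
    rw [Set.mem_Icc] at ht
    have h2 := ht.2
    rw [huv] at h2
    simp only [Set.mem_Icc]
    constructor <;> linarith [ht.1]
  have hcont : ContinuousOn (fun t => f (t - u)) (Set.Icc u v) :=
    hcf.comp ((continuous_id.sub continuous_const).continuousOn) hmap
  exact (hcont.integrableOn_Icc.mono_set Set.Ioc_subset_Icc_self).congr_fun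
    (fun t ht => (hh t ht).symm) measurableSet_Ioc

lemma seg_int_rev {f h : ℝ → ℂ} {u v : ℝ} (huv : v = u + 1)
    (hcf : ContinuousOn f (Set.Icc 0 1))
    (hh : ∀ t ∈ Set.Ioc u v, h t = -f (v - t)) : IntervalIntegrable h volume u v := by
  have hle : u ≤ v := by rw [huv]; linarith
  rw [intervalIntegrable_iff_integrableOn_Ioc_of_le hle]
  have hmap : Set.MapsTo (fun t => v - t) (Set.Icc u v) (Set.Icc 0 1) := by
    intro t ht
    rw [Set.mem_Icc] at ht
    simp only [Set.mem_Icc]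
    rw [huv]
    constructor <;> linarith [ht.1, ht.2]
  have hcont : ContinuousOn (fun t => -f (v - t)) (Set.Icc u v) :=
    (hcf.comp ((continuous_const.sub continuous_id).continuousOn) hmap).neg
  exact (hcont.integrableOn_Icc.mono_set Set.Ioc_subset_Icc_self).congr_fun
    (fun t ht => (hh t ht).symm) measurableSet_Ioc

end DblComm

/-- The double-commutator formula from Proposition 3.25: for the loop
`[[α,β],τ] = αβα⁻¹β⁻¹ · τ · βαβ⁻¹α⁻¹ · τ⁻¹`, the triple iterated integral is
`(∫_α ω₁ ∫_β ω₂ − ∫_β ω₁ ∫_α ω₂)∫_τ ω₃ + (∫_α ω₃ ∫_β ω₂ − ∫_β ω₃ ∫_α ω₂)∫_τ ω₁`.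
Here `a i`, `b i`, `c i` are the pullbacks of `ωᵢ` along `α`, `β`, `τ`, and
`h i` is the pullback along `[[α,β],τ]`, given piecewise on `[0,10]`. -/
theorem triple_iterated_integral_over_double_commutator
    (a b c h : Fin 3 → ℝ → ℂ)
    (ha : ∀ i, ContinuousOn (a i) (Set.Icc 0 1))
    (hb : ∀ i, ContinuousOn (b i) (Set.Icc 0 1))
    (hc : ∀ i, ContinuousOn (c i) (Set.Icc 0 1))
    (h1 : ∀ i, ∀ t ∈ Set.Icc (0:ℝ) 1, h i t = a i t)
    (h2 : ∀ i, ∀ t ∈ Set.Ioc (1:ℝ) 2, h i t = b i (t - 1))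
    (h3 : ∀ i, ∀ t ∈ Set.Ioc (2:ℝ) 3, h i t = -a i (3 - t))
    (h4 : ∀ i, ∀ t ∈ Set.Ioc (3:ℝ) 4, h i t = -b i (4 - t))
    (h5 : ∀ i, ∀ t ∈ Set.Ioc (4:ℝ) 5, h i t = c i (t - 4))
    (h6 : ∀ i, ∀ t ∈ Set.Ioc (5:ℝ) 6, h i t = b i (t - 5))
    (h7 : ∀ i, ∀ t ∈ Set.Ioc (6:ℝ) 7, h i t = a i (t - 6))
    (h8 : ∀ i, ∀ t ∈ Set.Ioc (7:ℝ) 8, h i t = -b i (8 - t))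
    (h9 : ∀ i, ∀ t ∈ Set.Ioc (8:ℝ) 9, h i t = -a i (9 - t))
    (h10 : ∀ i, ∀ t ∈ Set.Ioc (9:ℝ) 10, h i t = -c i (10 - t)) :
    (∫ t₃ in (0:ℝ)..10, ∫ t₂ in (0:ℝ)..t₃, ∫ t₁ in (0:ℝ)..t₂, h 0 t₁ * h 1 t₂ * h 2 t₃)
      = ((∫ t in (0:ℝ)..1, a 0 t) * (∫ t in (0:ℝ)..1, b 1 t)
          - (∫ t in (0:ℝ)..1, b 0 t) * (∫ t in (0:ℝ)..1, a 1 t)) * (∫ t in (0:ℝ)..1, c 2 t)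
        + ((∫ t in (0:ℝ)..1, a 2 t) * (∫ t in (0:ℝ)..1, b 1 t)
          - (∫ t in (0:ℝ)..1, b 2 t) * (∫ t in (0:ℝ)..1, a 1 t)) * (∫ t in (0:ℝ)..1, c 0 t) := by
  have iva : ∀ i, IntervalIntegrable (a i) volume 0 1 := fun i =>
    ContinuousOn.intervalIntegrable (by rw [Set.uIcc_of_le zero_le_one]; exact ha i)
  have ivb : ∀ i, IntervalIntegrable (b i) volume 0 1 := fun i =>
    ContinuousOn.intervalIntegrable (by rw [Set.uIcc_of_le zero_le_one]; exact hb i)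
  have ivc : ∀ i, IntervalIntegrable (c i) volume 0 1 := fun i =>
    ContinuousOn.intervalIntegrable (by rw [Set.uIcc_of_le zero_le_one]; exact hc i)
  have hs0 : ∀ i, ∀ t ∈ Set.Ioc (0:ℝ) 1, h i t = a i (t - 0) := fun i t ht => by
    rw [h1 i t (Set.Ioc_subset_Icc_self ht), sub_zero]
  have ivh0 : ∀ i, IntervalIntegrable (h i) volume 0 1 := fun i =>
    DblComm.seg_int_fwd (by norm_num) (ha i) (hs0 i)
  have ivh1 : ∀ i, IntervalIntegrable (h i) volume 1 2 := fun i =>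
    DblComm.seg_int_fwd (by norm_num) (hb i) (h2 i)
  have ivh2 : ∀ i, IntervalIntegrable (h i) volume 2 3 := fun i =>
    DblComm.seg_int_rev (by norm_num) (ha i) (h3 i)
  have ivh3 : ∀ i, IntervalIntegrable (h i) volume 3 4 := fun i =>
    DblComm.seg_int_rev (by norm_num) (hb i) (h4 i)
  have ivh4 : ∀ i, IntervalIntegrable (h i) volume 4 5 := fun i =>
    DblComm.seg_int_fwd (by norm_num) (hc i) (h5 i)
  have ivh5 : ∀ i, IntervalIntegrable (h i) volume 5 6 := fun i =>
    DblComm.seg_int_fwd (by norm_num) (hb i) (h6 i)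
  have ivh6 : ∀ i, IntervalIntegrable (h i) volume 6 7 := fun i =>
    DblComm.seg_int_fwd (by norm_num) (ha i) (h7 i)
  have ivh7 : ∀ i, IntervalIntegrable (h i) volume 7 8 := fun i =>
    DblComm.seg_int_rev (by norm_num) (hb i) (h8 i)
  have ivh8 : ∀ i, IntervalIntegrable (h i) volume 8 9 := fun i =>
    DblComm.seg_int_rev (by norm_num) (ha i) (h9 i)
  have ivh9 : ∀ i, IntervalIntegrable (h i) volume 9 10 := fun i =>
    DblComm.seg_int_rev (by norm_num) (hc i) (h10 i)
  have ivt9 : ∀ i, IntervalIntegrable (h i) volume 9 10 := ivh9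
  have ivt8 : ∀ i, IntervalIntegrable (h i) volume 8 10 := fun i =>
    (ivh8 i).trans (ivt9 i)
  have ivt7 : ∀ i, IntervalIntegrable (h i) volume 7 10 := fun i =>
    (ivh7 i).trans (ivt8 i)
  have ivt6 : ∀ i, IntervalIntegrable (h i) volume 6 10 := fun i =>
    (ivh6 i).trans (ivt7 i)
  have ivt5 : ∀ i, IntervalIntegrable (h i) volume 5 10 := fun i =>
    (ivh5 i).trans (ivt6 i)
  have ivt4 : ∀ i, IntervalIntegrable (h i) volume 4 10 := fun i =>
    (ivh4 i).trans (ivt5 i)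
  have ivt3 : ∀ i, IntervalIntegrable (h i) volume 3 10 := fun i =>
    (ivh3 i).trans (ivt4 i)
  have ivt2 : ∀ i, IntervalIntegrable (h i) volume 2 10 := fun i =>
    (ivh2 i).trans (ivt3 i)
  have ivt1 : ∀ i, IntervalIntegrable (h i) volume 1 10 := fun i =>
    (ivh1 i).trans (ivt2 i)
  have ivt0 : ∀ i, IntervalIntegrable (h i) volume 0 10 := fun i =>
    (ivh0 i).trans (ivt1 i)
  have S0 : ∀ i, II1 (h i) 0 1 = II1 (a i) 0 1 := fun i =>
    DblComm.seg_I1_fwd (by norm_num) (hs0 i)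
  have S1 : ∀ i, II1 (h i) 1 2 = II1 (b i) 0 1 := fun i =>
    DblComm.seg_I1_fwd (by norm_num) (h2 i)
  have S2 : ∀ i, II1 (h i) 2 3 = -II1 (a i) 0 1 := fun i =>
    DblComm.seg_I1_rev (by norm_num) (iva i) (h3 i)
  have S3 : ∀ i, II1 (h i) 3 4 = -II1 (b i) 0 1 := fun i =>
    DblComm.seg_I1_rev (by norm_num) (ivb i) (h4 i)
  have S4 : ∀ i, II1 (h i) 4 5 = II1 (c i) 0 1 := fun i =>
    DblComm.seg_I1_fwd (by norm_num) (h5 i)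
  have S5 : ∀ i, II1 (h i) 5 6 = II1 (b i) 0 1 := fun i =>
    DblComm.seg_I1_fwd (by norm_num) (h6 i)
  have S6 : ∀ i, II1 (h i) 6 7 = II1 (a i) 0 1 := fun i =>
    DblComm.seg_I1_fwd (by norm_num) (h7 i)
  have S7 : ∀ i, II1 (h i) 7 8 = -II1 (b i) 0 1 := fun i =>
    DblComm.seg_I1_rev (by norm_num) (ivb i) (h8 i)
  have S8 : ∀ i, II1 (h i) 8 9 = -II1 (a i) 0 1 := fun i =>
    DblComm.seg_I1_rev (by norm_num) (iva i) (h9 i)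
  have S9 : ∀ i, II1 (h i) 9 10 = -II1 (c i) 0 1 := fun i =>
    DblComm.seg_I1_rev (by norm_num) (ivc i) (h10 i)
  have D0 : ∀ i j, II2 (h i) (h j) 0 1 = II2 (a i) (a j) 0 1 := fun i j =>
    DblComm.seg_I2_fwd (by norm_num) (hs0 i) (hs0 j)
  have D1 : ∀ i j, II2 (h i) (h j) 1 2 = II2 (b i) (b j) 0 1 := fun i j =>
    DblComm.seg_I2_fwd (by norm_num) (h2 i) (h2 j)
  have D2 : ∀ i j, II2 (h i) (h j) 2 3
      = II1 (a i) 0 1 * II1 (a j) 0 1 - II2 (a i) (a j) 0 1 := fun i j =>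
    DblComm.seg_I2_rev (by norm_num) (iva i) (iva j) (h3 i) (h3 j)
  have D3 : ∀ i j, II2 (h i) (h j) 3 4
      = II1 (b i) 0 1 * II1 (b j) 0 1 - II2 (b i) (b j) 0 1 := fun i j =>
    DblComm.seg_I2_rev (by norm_num) (ivb i) (ivb j) (h4 i) (h4 j)
  have D4 : ∀ i j, II2 (h i) (h j) 4 5 = II2 (c i) (c j) 0 1 := fun i j =>
    DblComm.seg_I2_fwd (by norm_num) (h5 i) (h5 j)
  have D5 : ∀ i j, II2 (h i) (h j) 5 6 = II2 (b i) (b j) 0 1 := fun i j =>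
    DblComm.seg_I2_fwd (by norm_num) (h6 i) (h6 j)
  have D6 : ∀ i j, II2 (h i) (h j) 6 7 = II2 (a i) (a j) 0 1 := fun i j =>
    DblComm.seg_I2_fwd (by norm_num) (h7 i) (h7 j)
  have D7 : ∀ i j, II2 (h i) (h j) 7 8
      = II1 (b i) 0 1 * II1 (b j) 0 1 - II2 (b i) (b j) 0 1 := fun i j =>
    DblComm.seg_I2_rev (by norm_num) (ivb i) (ivb j) (h8 i) (h8 j)
  have D8 : ∀ i j, II2 (h i) (h j) 8 9
      = II1 (a i) 0 1 * II1 (a j) 0 1 - II2 (a i) (a j) 0 1 := fun i j =>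
    DblComm.seg_I2_rev (by norm_num) (iva i) (iva j) (h9 i) (h9 j)
  have D9 : ∀ i j, II2 (h i) (h j) 9 10
      = II1 (c i) 0 1 * II1 (c j) 0 1 - II2 (c i) (c j) 0 1 := fun i j =>
    DblComm.seg_I2_rev (by norm_num) (ivc i) (ivc j) (h10 i) (h10 j)
  have T0 : II3 (h 0) (h 1) (h 2) 0 1 = II3 (a 0) (a 1) (a 2) 0 1 :=
    DblComm.seg_I3_fwd (by norm_num) (hs0 0) (hs0 1) (hs0 2)
  have T1 : II3 (h 0) (h 1) (h 2) 1 2 = II3 (b 0) (b 1) (b 2) 0 1 :=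
    DblComm.seg_I3_fwd (by norm_num) (h2 0) (h2 1) (h2 2)
  have T2 : II3 (h 0) (h 1) (h 2) 2 3
      = -II3 (a 0) (a 1) (a 2) 0 1 + II2 (a 0) (a 1) 0 1 * II1 (a 2) 0 1
        + II1 (a 0) 0 1 * II2 (a 1) (a 2) 0 1
        - II1 (a 0) 0 1 * II1 (a 1) 0 1 * II1 (a 2) 0 1 :=
    DblComm.seg_I3_rev (by norm_num) (iva 0) (iva 1) (iva 2) (h3 0) (h3 1) (h3 2)
  have T3 : II3 (h 0) (h 1) (h 2) 3 4
      = -II3 (b 0) (b 1) (b 2) 0 1 + II2 (b 0) (b 1) 0 1 * II1 (b 2) 0 1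
        + II1 (b 0) 0 1 * II2 (b 1) (b 2) 0 1
        - II1 (b 0) 0 1 * II1 (b 1) 0 1 * II1 (b 2) 0 1 :=
    DblComm.seg_I3_rev (by norm_num) (ivb 0) (ivb 1) (ivb 2) (h4 0) (h4 1) (h4 2)
  have T4 : II3 (h 0) (h 1) (h 2) 4 5 = II3 (c 0) (c 1) (c 2) 0 1 :=
    DblComm.seg_I3_fwd (by norm_num) (h5 0) (h5 1) (h5 2)
  have T5 : II3 (h 0) (h 1) (h 2) 5 6 = II3 (b 0) (b 1) (b 2) 0 1 :=
    DblComm.seg_I3_fwd (by norm_num) (h6 0) (h6 1) (h6 2)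
  have T6 : II3 (h 0) (h 1) (h 2) 6 7 = II3 (a 0) (a 1) (a 2) 0 1 :=
    DblComm.seg_I3_fwd (by norm_num) (h7 0) (h7 1) (h7 2)
  have T7 : II3 (h 0) (h 1) (h 2) 7 8
      = -II3 (b 0) (b 1) (b 2) 0 1 + II2 (b 0) (b 1) 0 1 * II1 (b 2) 0 1
        + II1 (b 0) 0 1 * II2 (b 1) (b 2) 0 1
        - II1 (b 0) 0 1 * II1 (b 1) 0 1 * II1 (b 2) 0 1 :=
    DblComm.seg_I3_rev (by norm_num) (ivb 0) (ivb 1) (ivb 2) (h8 0) (h8 1) (h8 2)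
  have T8 : II3 (h 0) (h 1) (h 2) 8 9
      = -II3 (a 0) (a 1) (a 2) 0 1 + II2 (a 0) (a 1) 0 1 * II1 (a 2) 0 1
        + II1 (a 0) 0 1 * II2 (a 1) (a 2) 0 1
        - II1 (a 0) 0 1 * II1 (a 1) 0 1 * II1 (a 2) 0 1 :=
    DblComm.seg_I3_rev (by norm_num) (iva 0) (iva 1) (iva 2) (h9 0) (h9 1) (h9 2)
  have T9 : II3 (h 0) (h 1) (h 2) 9 10
      = -II3 (c 0) (c 1) (c 2) 0 1 + II2 (c 0) (c 1) 0 1 * II1 (c 2) 0 1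
        + II1 (c 0) 0 1 * II2 (c 1) (c 2) 0 1
        - II1 (c 0) 0 1 * II1 (c 1) 0 1 * II1 (c 2) 0 1 :=
    DblComm.seg_I3_rev (by norm_num) (ivc 0) (ivc 1) (ivc 2) (h10 0) (h10 1) (h10 2)
  have LHSeq : (∫ t₃ in (0:ℝ)..10, ∫ t₂ in (0:ℝ)..t₃, ∫ t₁ in (0:ℝ)..t₂,
      h 0 t₁ * h 1 t₂ * h 2 t₃) = II3 (h 0) (h 1) (h 2) 0 10 := by
    simp only [II3, II2, II1]
    refine intervalIntegral.integral_congr fun t₃ _ => ?_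
    rw [← intervalIntegral.integral_mul_const]
    refine intervalIntegral.integral_congr fun t₂ _ => ?_
    rw [intervalIntegral.integral_mul_const, intervalIntegral.integral_mul_const]
  rw [LHSeq]
  rw [DblComm.II3_split (v := 1) (ivt0 0) (ivt0 1) (ivt0 2) (by norm_num) (by norm_num)]
  rw [DblComm.II3_split (v := 2) (ivt1 0) (ivt1 1) (ivt1 2) (by norm_num) (by norm_num)]
  rw [DblComm.II3_split (v := 3) (ivt2 0) (ivt2 1) (ivt2 2) (by norm_num) (by norm_num)]
  rw [DblComm.II3_split (v := 4) (ivt3 0) (ivt3 1) (ivt3 2) (by norm_num) (by norm_num)]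
  rw [DblComm.II3_split (v := 5) (ivt4 0) (ivt4 1) (ivt4 2) (by norm_num) (by norm_num)]
  rw [DblComm.II3_split (v := 6) (ivt5 0) (ivt5 1) (ivt5 2) (by norm_num) (by norm_num)]
  rw [DblComm.II3_split (v := 7) (ivt6 0) (ivt6 1) (ivt6 2) (by norm_num) (by norm_num)]
  rw [DblComm.II3_split (v := 8) (ivt7 0) (ivt7 1) (ivt7 2) (by norm_num) (by norm_num)]
  rw [DblComm.II3_split (v := 9) (ivt8 0) (ivt8 1) (ivt8 2) (by norm_num) (by norm_num)]
  rw [DblComm.II2_split (v := 2) (ivt1 1) (ivt1 2) (by norm_num) (by norm_num)]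
  rw [DblComm.II2_split (v := 3) (ivt2 1) (ivt2 2) (by norm_num) (by norm_num)]
  rw [DblComm.II2_split (v := 4) (ivt3 1) (ivt3 2) (by norm_num) (by norm_num)]
  rw [DblComm.II2_split (v := 5) (ivt4 1) (ivt4 2) (by norm_num) (by norm_num)]
  rw [DblComm.II2_split (v := 6) (ivt5 1) (ivt5 2) (by norm_num) (by norm_num)]
  rw [DblComm.II2_split (v := 7) (ivt6 1) (ivt6 2) (by norm_num) (by norm_num)]
  rw [DblComm.II2_split (v := 8) (ivt7 1) (ivt7 2) (by norm_num) (by norm_num)]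
  rw [DblComm.II2_split (v := 9) (ivt8 1) (ivt8 2) (by norm_num) (by norm_num)]
  rw [DblComm.II1_split (v := 2) (ivt1 2) (by norm_num) (by norm_num)]
  rw [DblComm.II1_split (v := 3) (ivt2 2) (by norm_num) (by norm_num)]
  rw [DblComm.II1_split (v := 4) (ivt3 2) (by norm_num) (by norm_num)]
  rw [DblComm.II1_split (v := 5) (ivt4 2) (by norm_num) (by norm_num)]
  rw [DblComm.II1_split (v := 6) (ivt5 2) (by norm_num) (by norm_num)]
  rw [DblComm.II1_split (v := 7) (ivt6 2) (by norm_num) (by norm_num)]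
  rw [DblComm.II1_split (v := 8) (ivt7 2) (by norm_num) (by norm_num)]
  rw [DblComm.II1_split (v := 9) (ivt8 2) (by norm_num) (by norm_num)]
  simp only [S0, S1, S2, S3, S4, S5, S6, S7, S8, S9, D0, D1, D2, D3, D4, D5, D6, D7, D8, D9, T0, T1, T2, T3, T4, T5, T6, T7, T8, T9]
  simp only [II1, II2, II3]
  ring
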